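/- Let f be a probability density on ℝⁿ with ∫_{ℝⁿ} ||x||² f(x) dx = n. Then the differential entropy ∫_{ℝⁿ} (−f log f) dx is at most (n/2)(1 + log(2π)), with equality if and only if f equals the standard Gaussian density f(x) = (2π)^{-n/2} exp(−||x||²/2) almost everywhere. -/

import Mathlib

open MeasureTheory

/-- Pointwise Gibbs inequality: for `0 ≤ a` and `0 < b`,
`a log a - a log b + b - a ≥ 0`. -/
lemma gibbs_pointwise_nonneg {a b : ℝ} (ha : 0 ≤ a) (hb : 0 < b) :
    0 ≤ a * Real.log a - a * Real.log b + b - a := by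
  rcases ha.eq_or_lt with h | h
  · simp [← h, hb.le]
  · have hba : 0 < b / a := div_pos hb h
    have hlog : Real.log (b / a) ≤ b / a - 1 := Real.log_le_sub_one_of_pos hba
    have hmul : a * Real.log (b / a) ≤ a * (b / a - 1) :=
      mul_le_mul_of_nonneg_left hlog h.le
    have hrw : a * Real.log (b / a) = a * Real.log b - a * Real.log a := by
      rw [Real.log_div hb.ne' h.ne', mul_sub]
    have hrw2 : a * (b / a - 1) = b - a := by
      field_simp
    nlinarith [hmul]

lemma gibbs_pointwise_eq_iff {a b : ℝ} (ha : 0 ≤ a) (hb : 0 < b) :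
    a * Real.log a - a * Real.log b + b - a = 0 ↔ a = b := by
  constructor
  · intro h0
    rcases ha.eq_or_lt with h | h
    · exfalso
      rw [← h] at h0
      simp at h0
      exact hb.ne' h0
    · by_contra hne
      have hba : 0 < b / a := div_pos hb h
      have hba1 : b / a ≠ 1 := by
        intro h1
        exact hne ((div_eq_one_iff_eq h.ne').mp h1).symm
      have hlog : Real.log (b / a) < b / a - 1 := Real.log_lt_sub_one_of_pos hba hba1
      have hmul : a * Real.log (b / a) < a * (b / a - 1) :=
        mul_lt_mul_of_pos_left hlog h
      have hrw : a * Real.log (b / a) = a * Real.log b - a * Real.log a := by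
        rw [Real.log_div hb.ne' h.ne', mul_sub]
      have hrw2 : a * (b / a - 1) = b - a := by
        field_simp
      nlinarith [hmul]
  · intro h
    subst h
    ring

/-- Maximum-entropy characterization of the Gaussian: among probability densities `f` on
`ℝⁿ` with `∫ ‖x‖² f = n`, the differential entropy `∫ −f log f` is at most
`(n/2)(1 + log 2π)`, with equality iff `f` is the standard Gaussian density a.e. -/
theorem entropy_le_gaussian (n : ℕ) (f : EuclideanSpace ℝ (Fin n) → ℝ)
    (hfmeas : Measurable f) (hf0 : ∀ x, 0 ≤ f x)
    (hfint : Integrable f volume) (hf1 : ∫ x, f x ∂volume = 1)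
    (hmom_int : Integrable (fun x => ‖x‖ ^ 2 * f x) volume)
    (hmom : ∫ x, ‖x‖ ^ 2 * f x ∂volume = (n : ℝ))
    (hent_int : Integrable (fun x => f x * Real.log (f x)) volume) :
    ∫ x, -(f x * Real.log (f x)) ∂volume ≤ (n : ℝ) / 2 * (1 + Real.log (2 * Real.pi)) ∧
      ((∫ x, -(f x * Real.log (f x)) ∂volume = (n : ℝ) / 2 * (1 + Real.log (2 * Real.pi))) ↔
        f =ᵐ[volume] fun x => (2 * Real.pi) ^ (-(n : ℝ) / 2) * Real.exp (-‖x‖ ^ 2 / 2)) := by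
  have h2pi : (0 : ℝ) < 2 * Real.pi := by positivity
  set g : EuclideanSpace ℝ (Fin n) → ℝ :=
    fun x => (2 * Real.pi) ^ (-(n : ℝ) / 2) * Real.exp (-‖x‖ ^ 2 / 2) with hg
  have hgpos : ∀ x, 0 < g x := fun x => by positivity
  -- integrability of the Gaussian
  have hexp_int : Integrable (fun x : EuclideanSpace ℝ (Fin n) => Real.exp (-‖x‖ ^ 2 / 2))
      volume := by
    have h1 : Integrable
        (fun v : EuclideanSpace ℝ (Fin n) => Complex.exp (-(1/2 : ℂ) * (‖v‖ : ℂ) ^ 2))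
        volume := by
      simpa using GaussianFourier.integrable_cexp_neg_mul_sq_norm_add
        (V := EuclideanSpace ℝ (Fin n)) (b := (1/2 : ℂ)) (by norm_num) 0
        (0 : EuclideanSpace ℝ (Fin n))
    refine h1.norm.congr (Filter.Eventually.of_forall fun v => ?_)
    show ‖Complex.exp (-(1/2 : ℂ) * (‖v‖ : ℂ) ^ 2)‖ = Real.exp (-‖v‖ ^ 2 / 2)
    have hc : (-(1/2 : ℂ) * (‖v‖ : ℂ) ^ 2) = ((-‖v‖ ^ 2 / 2 : ℝ) : ℂ) := by
      push_cast; ring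
    rw [hc, Complex.norm_exp, Complex.ofReal_re]
  have hgint : Integrable g volume := hexp_int.const_mul _
  -- integral of the Gaussian
  have hgone : ∫ x, g x ∂volume = 1 := by
    have hikey : ∫ x : EuclideanSpace ℝ (Fin n), Real.exp (-(1/2 : ℝ) * ‖x‖ ^ 2) ∂volume
        = (Real.pi / (1/2 : ℝ)) ^ ((Module.finrank ℝ (EuclideanSpace ℝ (Fin n)) : ℝ) / 2) :=
      GaussianFourier.integral_rexp_neg_mul_sq_norm (by norm_num)
    have hikey' : ∫ x : EuclideanSpace ℝ (Fin n), Real.exp (-‖x‖ ^ 2 / 2) ∂volume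
        = (2 * Real.pi) ^ ((n : ℝ) / 2) := by
      rw [show (fun x : EuclideanSpace ℝ (Fin n) => Real.exp (-‖x‖ ^ 2 / 2))
          = fun x : EuclideanSpace ℝ (Fin n) => Real.exp (-(1/2 : ℝ) * ‖x‖ ^ 2)
        from funext fun x => by ring_nf]
      rw [hikey, finrank_euclideanSpace_fin,
        show Real.pi / (1/2 : ℝ) = 2 * Real.pi by ring]
    rw [hg]
    simp only []
    rw [integral_const_mul, hikey', ← Real.rpow_add h2pi,
      show (-(n:ℝ)/2 + (n:ℝ)/2) = 0 by ring, Real.rpow_zero]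
  -- log of the Gaussian
  have hlogg : ∀ x, Real.log (g x)
      = (-(n : ℝ) / 2) * Real.log (2 * Real.pi) - ‖x‖ ^ 2 / 2 := by
    intro x
    rw [hg]
    simp only []
    rw [Real.log_mul (by positivity) (Real.exp_ne_zero _), Real.log_rpow h2pi, Real.log_exp]
    ring
  -- integrability of f * log g
  have hflogg_eq : (fun x => f x * Real.log (g x))
      = fun x => (-(n : ℝ) / 2 * Real.log (2 * Real.pi)) * f x - (1/2) * (‖x‖ ^ 2 * f x) := by
    funext x; rw [hlogg x]; ring
  have hflogg_int : Integrable (fun x => f x * Real.log (g x)) volume := by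
    rw [hflogg_eq]
    exact (hfint.const_mul _).sub (hmom_int.const_mul _)
  have hflogg : ∫ x, f x * Real.log (g x) ∂volume
      = -(n : ℝ) / 2 * Real.log (2 * Real.pi) - (n : ℝ) / 2 := by
    rw [hflogg_eq,
      integral_sub (hfint.const_mul _) (hmom_int.const_mul _),
      integral_const_mul, integral_const_mul, hf1, hmom]
    ring
  -- the nonnegative integrand
  have hA : Integrable (fun x => f x * Real.log (f x) - f x * Real.log (g x)) volume :=
    hent_int.sub hflogg_int
  have hB : Integrable (fun x => f x * Real.log (f x) - f x * Real.log (g x) + g x) volume :=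
    hA.add hgint
  have hhint : Integrable
      (fun x => f x * Real.log (f x) - f x * Real.log (g x) + g x - f x) volume :=
    hB.sub hfint
  have hhnonneg : ∀ x, 0 ≤ f x * Real.log (f x) - f x * Real.log (g x) + g x - f x :=
    fun x => gibbs_pointwise_nonneg (hf0 x) (hgpos x)
  have hhintegral : ∫ x, (f x * Real.log (f x) - f x * Real.log (g x) + g x - f x) ∂volume
      = (∫ x, f x * Real.log (f x) ∂volume) + (n : ℝ) / 2 * (1 + Real.log (2 * Real.pi)) := by
    rw [integral_sub hB hfint, integral_add hA hgint,
      integral_sub hent_int hflogg_int, hflogg, hgone, hf1]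
    ring
  have hneg : ∫ x, -(f x * Real.log (f x)) ∂volume = -∫ x, f x * Real.log (f x) ∂volume :=
    integral_neg _
  constructor
  · have h0 : 0 ≤ ∫ x, (f x * Real.log (f x) - f x * Real.log (g x) + g x - f x) ∂volume :=
      integral_nonneg hhnonneg
    rw [hhintegral] at h0
    rw [hneg]
    linarith
  · rw [hneg]
    constructor
    · intro heq
      have h0 : ∫ x, (f x * Real.log (f x) - f x * Real.log (g x) + g x - f x) ∂volume = 0 := by
        rw [hhintegral]; linarith
      have hae : (fun x => f x * Real.log (f x) - f x * Real.log (g x) + g x - f x)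
          =ᵐ[volume] 0 :=
        (integral_eq_zero_iff_of_nonneg_ae (Filter.Eventually.of_forall hhnonneg) hhint).mp h0
      filter_upwards [hae] with x hx
      exact (gibbs_pointwise_eq_iff (hf0 x) (hgpos x)).mp hx
    · intro hae
      have hae0 : (fun x => f x * Real.log (f x) - f x * Real.log (g x) + g x - f x)
          =ᵐ[volume] 0 := by
        filter_upwards [hae] with x hx
        have hx' : f x = g x := hx
        simp only [hx', Pi.zero_apply]
        ring
      have h0 : ∫ x, (f x * Real.log (f x) - f x * Real.log (g x) + g x - f x) ∂volume = 0 := by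
        rw [integral_congr_ae hae0]
        simp
      rw [hhintegral] at h0
      linarith
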